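/- Let (Ω, ℱ, P) be a probability space, m a positive integer, C ≥ 1, r > 0, and x : [0,∞) × Ω → ℝ^n jointly measurable. Let Z_k : Ω → [0,∞), k ≥ 0, satisfy almost surely Z₀ = 0, Z_k ≤ Z_{k+1}, and C^{−1}‖x(Z_k)‖ ≤ ‖x(t)‖ whenever Z_k ≤ t ≤ Z_{k+1}. Assume that for every k ≥ 0 the cycle length R_{k+1} = Z_{k+1} − Z_k is independent of the random variable ‖x(Z_k)‖^m and satisfies E[R_{k+1}] = r. Then C^{−m} r Σ_{k=0}^{∞} E[‖x(Z_k)‖^m] ≤ ∫_0^∞ E[‖x(t)‖^m] dt. In particular, if ∫_0^∞ E[‖x(t)‖^m] dt < ∞, then Σ_{k=0}^{∞} E[‖x(Z_k)‖^m] < ∞. -/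

import Mathlib

open scoped BigOperators
open MeasureTheory ProbabilityTheory

set_option maxHeartbeats 1000000
noncomputable section

/-- The Euclidean norm of a vector in `ℝⁿ`. -/
def euclNorm {n : ℕ} (x : Fin n → ℝ) : ℝ := Real.sqrt (∑ i, x i ^ 2)

lemma euclNorm_continuous {n : ℕ} : Continuous (euclNorm (n := n)) := by
  unfold euclNorm
  exact Real.continuous_sqrt.comp
    (continuous_finset_sum _ fun i _ => (continuous_apply i).pow 2)

lemma euclNorm_nonneg {n : ℕ} (x : Fin n → ℝ) : 0 ≤ euclNorm x :=
  Real.sqrt_nonneg _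

/-- Under the lower cycle comparison `C⁻¹‖x(Z_k)‖ ≤ ‖x(t)‖` on
`[Z_k, Z_{k+1}]`, with each cycle length `R_{k+1} = Z_{k+1} - Z_k` independent of
`‖x(Z_k)‖^m` and of mean `r`, one has
`C^{-m} r Σ_k E[‖x(Z_k)‖^m] ≤ ∫₀^∞ E[‖x(t)‖^m] dt`; in particular finiteness of the
right-hand side forces summability of the sampled `m`th moments. -/
theorem sampled_sum_le_integral {Ω : Type*} [MeasurableSpace Ω]
    (P : Measure Ω) [IsProbabilityMeasure P]
    (n m : ℕ) (hm : 0 < m) (C r : ℝ) (hC : 1 ≤ C) (hr : 0 < r)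
    (x : ℝ → Ω → Fin n → ℝ)
    (hxmeas : Measurable (Function.uncurry x))
    (Z : ℕ → Ω → ℝ) (hZmeas : ∀ k, Measurable (Z k))
    (hZ : ∀ᵐ ω ∂P,
      Z 0 ω = 0 ∧
      (∀ k, Z k ω ≤ Z (k + 1) ω) ∧
      (∀ k, ∀ t, Z k ω ≤ t → t ≤ Z (k + 1) ω →
        C⁻¹ * euclNorm (x (Z k ω) ω) ≤ euclNorm (x t ω)))
    (hindep : ∀ k : ℕ,
      IndepFun (fun ω => Z (k + 1) ω - Z k ω)
        (fun ω => euclNorm (x (Z k ω) ω) ^ m) P)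
    (hmean : ∀ k : ℕ, (∫ ω, (Z (k + 1) ω - Z k ω) ∂P) = r) :
    (ENNReal.ofReal ((C ^ m)⁻¹ * r) *
        ∑' k : ℕ, ∫⁻ ω, ENNReal.ofReal (euclNorm (x (Z k ω) ω) ^ m) ∂P)
      ≤ ∫⁻ t in Set.Ioi (0 : ℝ), ∫⁻ ω, ENNReal.ofReal (euclNorm (x t ω) ^ m) ∂P ∧
    ((∫⁻ t in Set.Ioi (0 : ℝ), ∫⁻ ω, ENNReal.ofReal (euclNorm (x t ω) ^ m) ∂P) < ⊤ →
      (∑' k : ℕ, ∫⁻ ω, ENNReal.ofReal (euclNorm (x (Z k ω) ω) ^ m) ∂P) < ⊤) := by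
  have hC0 : (0 : ℝ) < C := lt_of_lt_of_le one_pos hC
  have hc0 : (0 : ℝ) ≤ (C ^ m)⁻¹ := by positivity
  -- measurability of the integrand
  have hxm : Measurable fun p : ℝ × Ω => x p.1 p.2 := hxmeas
  have hFmeas : Measurable (fun p : ℝ × Ω => ENNReal.ofReal (euclNorm (x p.1 p.2) ^ m)) := by
    have h2 : Measurable fun p : ℝ × Ω => euclNorm (x p.1 p.2) :=
      euclNorm_continuous.measurable.comp hxm
    exact (h2.pow_const m).ennreal_ofReal
  have hYmeas0 : ∀ k, Measurable (fun ω => euclNorm (x (Z k ω) ω) ^ m) := by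
    intro k
    have h1 : Measurable fun ω : Ω => x (Z k ω) ω :=
      hxm.comp ((hZmeas k).prodMk measurable_id)
    have h2 : Measurable fun ω : Ω => euclNorm (x (Z k ω) ω) :=
      euclNorm_continuous.measurable.comp h1
    exact h2.pow_const m
  have hYmeas : ∀ k, Measurable (fun ω => ENNReal.ofReal (euclNorm (x (Z k ω) ω) ^ m)) :=
    fun k => (hYmeas0 k).ennreal_ofReal
  have hRmeas : ∀ k, Measurable (fun ω => Z (k + 1) ω - Z k ω) := fun k =>
    (hZmeas (k + 1)).sub (hZmeas k)
  -- the term-by-term lower bound functions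
  set g : ℕ → Ω → ENNReal := fun k ω =>
    ENNReal.ofReal (Z (k + 1) ω - Z k ω) *
      ENNReal.ofReal ((C ^ m)⁻¹ * euclNorm (x (Z k ω) ω) ^ m) with hg
  have hgmeas : ∀ k, Measurable (g k) := by
    intro k
    exact (hRmeas k).ennreal_ofReal.mul (measurable_const.mul (hYmeas0 k)).ennreal_ofReal
  -- Step 1: swap integrals (Tonelli)
  have hswap : (∫⁻ t in Set.Ioi (0 : ℝ), ∫⁻ ω, ENNReal.ofReal (euclNorm (x t ω) ^ m) ∂P)
      = ∫⁻ ω, (∫⁻ t in Set.Ioi (0 : ℝ), ENNReal.ofReal (euclNorm (x t ω) ^ m)) ∂P := by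
    exact lintegral_lintegral_swap hFmeas.aemeasurable
  -- Step 2: pointwise (a.e. ω) bound
  have hptwise : ∀ᵐ ω ∂P, (∑' k, g k ω)
      ≤ ∫⁻ t in Set.Ioi (0 : ℝ), ENNReal.ofReal (euclNorm (x t ω) ^ m) := by
    filter_upwards [hZ] with ω hω
    obtain ⟨h0, hmono, hcomp⟩ := hω
    have hZmono : Monotone fun k => Z k ω := monotone_nat_of_le_succ hmono
    have hZnn : ∀ k, 0 ≤ Z k ω := fun k => h0 ▸ hZmono (Nat.zero_le k)
    set s : ℕ → Set ℝ := fun k => Set.Ioc (Z k ω) (Z (k + 1) ω) with hs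
    have hsmeas : ∀ k, MeasurableSet (s k) := fun k => measurableSet_Ioc
    have hsdisj : Pairwise (Function.onFun Disjoint s) := by
      intro i j hij
      have key : ∀ i j : ℕ, i < j → Disjoint (s i) (s j) := by
        intro i j hlt
        refine Set.Ioc_disjoint_Ioc.2 ?_
        have : Z (i + 1) ω ≤ Z j ω := hZmono hlt
        exact le_trans (min_le_left _ _) (le_trans this (le_max_right _ _))
      rcases hij.lt_or_gt with h | h
      · exact key _ _ h
      · exact (key _ _ h).symm
    have hsub : (⋃ k, s k) ⊆ Set.Ioi (0 : ℝ) := by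
      intro t ht
      obtain ⟨k, hk⟩ := Set.mem_iUnion.1 ht
      exact lt_of_le_of_lt (hZnn k) hk.1
    have hterm : ∀ k, g k ω ≤ ∫⁻ t in s k, ENNReal.ofReal (euclNorm (x t ω) ^ m) := by
      intro k
      have hbound : ∀ t ∈ s k,
          ENNReal.ofReal ((C ^ m)⁻¹ * euclNorm (x (Z k ω) ω) ^ m)
            ≤ ENNReal.ofReal (euclNorm (x t ω) ^ m) := by
        intro t ht
        apply ENNReal.ofReal_le_ofReal
        have h1 : C⁻¹ * euclNorm (x (Z k ω) ω) ≤ euclNorm (x t ω) :=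
          hcomp k t (le_of_lt ht.1) ht.2
        have h2 : (C⁻¹ * euclNorm (x (Z k ω) ω)) ^ m ≤ euclNorm (x t ω) ^ m :=
          pow_le_pow_left₀ (mul_nonneg (by positivity) (euclNorm_nonneg _)) h1 m
        calc (C ^ m)⁻¹ * euclNorm (x (Z k ω) ω) ^ m
            = (C⁻¹ * euclNorm (x (Z k ω) ω)) ^ m := by
              rw [mul_pow, inv_pow]
          _ ≤ euclNorm (x t ω) ^ m := h2
      calc g k ω
          = ENNReal.ofReal ((C ^ m)⁻¹ * euclNorm (x (Z k ω) ω) ^ m) *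
              volume (s k) := by
            simp only [hg, hs, Real.volume_Ioc]
            ring
        _ = ∫⁻ _ in s k, ENNReal.ofReal ((C ^ m)⁻¹ * euclNorm (x (Z k ω) ω) ^ m) := by
            rw [setLIntegral_const]
        _ ≤ ∫⁻ t in s k, ENNReal.ofReal (euclNorm (x t ω) ^ m) :=
            setLIntegral_mono' (hsmeas k) hbound
    calc (∑' k, g k ω)
        ≤ ∑' k, ∫⁻ t in s k, ENNReal.ofReal (euclNorm (x t ω) ^ m) :=
          ENNReal.tsum_le_tsum hterm
      _ = ∫⁻ t in ⋃ k, s k, ENNReal.ofReal (euclNorm (x t ω) ^ m) :=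
          (lintegral_iUnion hsmeas hsdisj _).symm
      _ ≤ ∫⁻ t in Set.Ioi (0 : ℝ), ENNReal.ofReal (euclNorm (x t ω) ^ m) :=
          lintegral_mono_set hsub
  -- Step 3: expectation of each term via independence
  have hexp : ∀ k, (∫⁻ ω, g k ω ∂P)
      = ENNReal.ofReal ((C ^ m)⁻¹ * r) *
          ∫⁻ ω, ENNReal.ofReal (euclNorm (x (Z k ω) ω) ^ m) ∂P := by
    intro k
    have hRnn : 0 ≤ᵐ[P] fun ω => Z (k + 1) ω - Z k ω := by
      filter_upwards [hZ] with ω hω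
      exact sub_nonneg.2 (hω.2.1 k)
    have hRint : Integrable (fun ω => Z (k + 1) ω - Z k ω) P := by
      by_contra h
      have hk := hmean k
      rw [integral_undef h] at hk
      exact absurd hk (by linarith)
    have hRlint : (∫⁻ ω, ENNReal.ofReal (Z (k + 1) ω - Z k ω) ∂P) = ENNReal.ofReal r := by
      rw [← ofReal_integral_eq_lintegral_ofReal hRint hRnn, hmean k]
    have hindep' : IndepFun (fun ω => ENNReal.ofReal (Z (k + 1) ω - Z k ω))
        (fun ω => ENNReal.ofReal (euclNorm (x (Z k ω) ω) ^ m)) P :=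
      (hindep k).comp ENNReal.measurable_ofReal ENNReal.measurable_ofReal
    have hmul : (∫⁻ ω, ENNReal.ofReal (Z (k + 1) ω - Z k ω) *
          ENNReal.ofReal (euclNorm (x (Z k ω) ω) ^ m) ∂P)
        = (∫⁻ ω, ENNReal.ofReal (Z (k + 1) ω - Z k ω) ∂P) *
            ∫⁻ ω, ENNReal.ofReal (euclNorm (x (Z k ω) ω) ^ m) ∂P :=
      lintegral_mul_eq_lintegral_mul_lintegral_of_indepFun''
        (hRmeas k).ennreal_ofReal.aemeasurable
        (hYmeas k).aemeasurable hindep'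
    calc (∫⁻ ω, g k ω ∂P)
        = ∫⁻ ω, ENNReal.ofReal ((C ^ m)⁻¹) *
            (ENNReal.ofReal (Z (k + 1) ω - Z k ω) *
              ENNReal.ofReal (euclNorm (x (Z k ω) ω) ^ m)) ∂P := by
          apply lintegral_congr
          intro ω
          simp only [hg, ENNReal.ofReal_mul hc0]
          ring
      _ = ENNReal.ofReal ((C ^ m)⁻¹) *
            ∫⁻ ω, ENNReal.ofReal (Z (k + 1) ω - Z k ω) *
              ENNReal.ofReal (euclNorm (x (Z k ω) ω) ^ m) ∂P := by
          rw [lintegral_const_mul (f := fun ω => ENNReal.ofReal (Z (k + 1) ω - Z k ω) * ENNReal.ofReal (euclNorm (x (Z k ω) ω) ^ m)) _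
            ((hRmeas k).ennreal_ofReal.mul (hYmeas k))]
      _ = ENNReal.ofReal ((C ^ m)⁻¹) * (ENNReal.ofReal r *
            ∫⁻ ω, ENNReal.ofReal (euclNorm (x (Z k ω) ω) ^ m) ∂P) := by
          rw [hmul, hRlint]
      _ = ENNReal.ofReal ((C ^ m)⁻¹ * r) *
            ∫⁻ ω, ENNReal.ofReal (euclNorm (x (Z k ω) ω) ^ m) ∂P := by
          rw [ENNReal.ofReal_mul hc0, mul_assoc]
  -- main inequality
  have hmain : (ENNReal.ofReal ((C ^ m)⁻¹ * r) *
        ∑' k : ℕ, ∫⁻ ω, ENNReal.ofReal (euclNorm (x (Z k ω) ω) ^ m) ∂P)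
      ≤ ∫⁻ t in Set.Ioi (0 : ℝ), ∫⁻ ω, ENNReal.ofReal (euclNorm (x t ω) ^ m) ∂P := by
    rw [hswap]
    calc ENNReal.ofReal ((C ^ m)⁻¹ * r) *
          ∑' k : ℕ, ∫⁻ ω, ENNReal.ofReal (euclNorm (x (Z k ω) ω) ^ m) ∂P
        = ∑' k : ℕ, ENNReal.ofReal ((C ^ m)⁻¹ * r) *
            ∫⁻ ω, ENNReal.ofReal (euclNorm (x (Z k ω) ω) ^ m) ∂P :=
          ENNReal.tsum_mul_left.symm
      _ = ∑' k : ℕ, ∫⁻ ω, g k ω ∂P := by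
          exact tsum_congr fun k => (hexp k).symm
      _ = ∫⁻ ω, ∑' k, g k ω ∂P :=
          (lintegral_tsum fun k => (hgmeas k).aemeasurable).symm
      _ ≤ ∫⁻ ω, (∫⁻ t in Set.Ioi (0 : ℝ), ENNReal.ofReal (euclNorm (x t ω) ^ m)) ∂P :=
          lintegral_mono_ae hptwise
  refine ⟨hmain, fun hfin => ?_⟩
  by_contra htop
  rw [not_lt, top_le_iff] at htop
  rw [htop, ENNReal.mul_top (by
    simp only [ne_eq, ENNReal.ofReal_eq_zero, not_le]
    positivity)] at hmain
  exact absurd (lt_of_le_of_lt hmain hfin) (lt_irrefl ⊤)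

end
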